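/- arXiv:1209.1014 — 3 statements merged into one kernel-verified Lean document; each statement's English description precedes it below -/
import Mathlib

section
/- The map Λ ↦ (id ⊗ Λ)(P̃⁺) is a bijection between completely positive trace-preserving maps Λ : M_n(ℂ) → M_m(ℂ) and operators π on ℂ^n ⊗ ℂ^m satisfying π ≥ 0 and Tr_B(π) = I_n, with inverse π ↦ (ρ ↦ Tr_A[π (ρ^T ⊗ I_m)]). -/
open Matrix
open scoped Kronecker ComplexOrder

noncomputable section

/-- Partial trace over the second tensor factor. -/
def trB {n m : ℕ} (π : Matrix (Fin n × Fin m) (Fin n × Fin m) ℂ) :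
    Matrix (Fin n) (Fin n) ℂ :=
  Matrix.of fun i j => ∑ a : Fin m, π (i, a) (j, a)

/-- Partial trace over the first tensor factor. -/
def trA {n m : ℕ} (π : Matrix (Fin n × Fin m) (Fin n × Fin m) ℂ) :
    Matrix (Fin m) (Fin m) ℂ :=
  Matrix.of fun a b => ∑ i : Fin n, π (i, a) (i, b)

/-- The action of `id_k ⊗ Λ` on `M_k ⊗ M_n`. -/
def matMap {k n m : ℕ}
    (Λ : Matrix (Fin n) (Fin n) ℂ →ₗ[ℂ] Matrix (Fin m) (Fin m) ℂ)
    (X : Matrix (Fin k × Fin n) (Fin k × Fin n) ℂ) :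
    Matrix (Fin k × Fin m) (Fin k × Fin m) ℂ :=
  Matrix.of fun p q => Λ (Matrix.of fun i j => X (p.1, i) (q.1, j)) p.2 q.2

/-- Complete positivity: `id_k ⊗ Λ` preserves positive semidefiniteness for all `k`. -/
def IsCP {n m : ℕ} (Λ : Matrix (Fin n) (Fin n) ℂ →ₗ[ℂ] Matrix (Fin m) (Fin m) ℂ) : Prop :=
  ∀ k : ℕ, ∀ X : Matrix (Fin k × Fin n) (Fin k × Fin n) ℂ,
    X.PosSemidef → (matMap Λ X).PosSemidef

/-- Trace preservation. -/
def IsTP {n m : ℕ} (Λ : Matrix (Fin n) (Fin n) ℂ →ₗ[ℂ] Matrix (Fin m) (Fin m) ℂ) : Prop :=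
  ∀ X, (Λ X).trace = X.trace

/-- The Choi operator `π = Σ_{i,j} E_{ij} ⊗ Λ(E_{ij})`. -/
def choi {n m : ℕ} (Λ : Matrix (Fin n) (Fin n) ℂ →ₗ[ℂ] Matrix (Fin m) (Fin m) ℂ) :
    Matrix (Fin n × Fin m) (Fin n × Fin m) ℂ :=
  ∑ i : Fin n, ∑ j : Fin n,
    Matrix.single i j (1 : ℂ) ⊗ₖ Λ (Matrix.single i j 1)

lemma choi_apply {n m : ℕ} (Λ : Matrix (Fin n) (Fin n) ℂ →ₗ[ℂ] Matrix (Fin m) (Fin m) ℂ)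
    (i j : Fin n) (a b : Fin m) :
    choi Λ (i, a) (j, b) = Λ (single i j 1) a b := by
  simp [choi, Matrix.sum_apply, single, ite_and, ite_mul,
    Finset.sum_ite_eq, Finset.sum_ite_eq']

/-- The candidate inverse map. -/
def Lmap {n m : ℕ} (π : Matrix (Fin n × Fin m) (Fin n × Fin m) ℂ) :
    Matrix (Fin n) (Fin n) ℂ →ₗ[ℂ] Matrix (Fin m) (Fin m) ℂ where
  toFun ρ := Matrix.of fun a b => ∑ i : Fin n, ∑ j : Fin n, π (i, a) (j, b) * ρ i j
  map_add' x y := by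
    ext a b
    simp [mul_add, Finset.sum_add_distrib]
  map_smul' c x := by
    ext a b
    simp [Finset.mul_sum, mul_left_comm]

lemma Lmap_apply {n m : ℕ} (π : Matrix (Fin n × Fin m) (Fin n × Fin m) ℂ)
    (ρ : Matrix (Fin n) (Fin n) ℂ) (a b : Fin m) :
    Lmap π ρ a b = ∑ i : Fin n, ∑ j : Fin n, π (i, a) (j, b) * ρ i j := rfl

lemma trA_mul_kron {n m : ℕ} (π : Matrix (Fin n × Fin m) (Fin n × Fin m) ℂ)
    (ρ : Matrix (Fin n) (Fin n) ℂ) :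
    trA (π * (ρᵀ ⊗ₖ (1 : Matrix (Fin m) (Fin m) ℂ))) = Lmap π ρ := by
  ext a b
  simp only [trA, of_apply, Matrix.mul_apply, Lmap_apply, Fintype.sum_prod_type,
    kroneckerMap_apply, transpose_apply, Matrix.one_apply, mul_ite, mul_one, mul_zero,
    Finset.sum_ite_eq', Finset.mem_univ, if_true]

lemma Lmap_choi {n m : ℕ} (Λ : Matrix (Fin n) (Fin n) ℂ →ₗ[ℂ] Matrix (Fin m) (Fin m) ℂ) :
    Lmap (choi Λ) = Λ := by
  apply LinearMap.ext
  intro ρ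
  have h : ∀ i j : Fin n, single i j (ρ i j) = ρ i j • single i j (1 : ℂ) := by
    intro i j; rw [smul_single, smul_eq_mul, mul_one]
  conv_rhs => rw [matrix_eq_sum_single ρ]
  ext a b
  simp only [map_sum, Matrix.sum_apply, Lmap_apply, choi_apply]
  refine Finset.sum_congr rfl fun i _ => Finset.sum_congr rfl fun j _ => ?_
  rw [h, LinearMap.map_smul, Matrix.smul_apply, smul_eq_mul, mul_comm]

lemma choi_Lmap {n m : ℕ} (π : Matrix (Fin n × Fin m) (Fin n × Fin m) ℂ) :
    choi (Lmap π) = π := by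
  ext ⟨i, a⟩ ⟨j, b⟩
  rw [choi_apply, Lmap_apply]
  simp [single, ite_and, mul_ite, Finset.sum_ite_eq, Finset.sum_ite_eq']

lemma isTP_Lmap {n m : ℕ} (π : Matrix (Fin n × Fin m) (Fin n × Fin m) ℂ)
    (h : trB π = 1) : IsTP (Lmap π) := by
  intro ρ
  have hπ : ∀ i j : Fin n, ∑ a : Fin m, π (i, a) (j, a) = (1 : Matrix (Fin n) (Fin n) ℂ) i j := by
    intro i j; rw [← h]; rfl
  simp only [Matrix.trace, Matrix.diag, Lmap_apply]
  calc ∑ a : Fin m, ∑ i : Fin n, ∑ j : Fin n, π (i, a) (j, a) * ρ i j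
      = ∑ i : Fin n, ∑ j : Fin n, (∑ a : Fin m, π (i, a) (j, a)) * ρ i j := by
        rw [Finset.sum_comm]
        refine Finset.sum_congr rfl fun i _ => ?_
        rw [Finset.sum_comm]
        exact Finset.sum_congr rfl fun j _ => (Finset.sum_mul _ _ _).symm
    _ = ∑ i : Fin n, ρ i i := by
        simp [hπ, Matrix.one_apply, ite_mul]

lemma isCP_Lmap {n m : ℕ} (π : Matrix (Fin n × Fin m) (Fin n × Fin m) ℂ)
    (h : π.PosSemidef) : IsCP (Lmap π) := by
  obtain ⟨B, hB⟩ : ∃ B : Matrix (Fin n × Fin m) (Fin n × Fin m) ℂ, π = Bᴴ * B := by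
    open scoped MatrixOrder in
    exact CStarAlgebra.nonneg_iff_eq_star_mul_self.mp h.nonneg
  subst hB
  intro k X hX
  have key : matMap (Lmap (Bᴴ * B)) X = ∑ r : Fin n × Fin m,
      ((1 : Matrix (Fin k) (Fin k) ℂ) ⊗ₖ (Matrix.of fun (a : Fin m) (i : Fin n) => star (B r (i, a)))) * X *
      ((1 : Matrix (Fin k) (Fin k) ℂ) ⊗ₖ (Matrix.of fun (a : Fin m) (i : Fin n) => star (B r (i, a))))ᴴ := by
    ext p q
    show (∑ i : Fin n, ∑ j : Fin n, (Bᴴ * B) (i, p.2) (j, q.2) * X (p.1, i) (q.1, j)) = _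
    simp only [Matrix.sum_apply, Matrix.mul_apply, conjTranspose_apply, kroneckerMap_apply,
      Matrix.one_apply, of_apply, Fintype.sum_prod_type, star_star, ite_mul, mul_ite,
      one_mul, zero_mul, mul_one, mul_zero, Finset.sum_ite_eq, Finset.sum_ite_eq',
      Finset.sum_ite_irrel, Finset.sum_const_zero,
      Finset.mem_univ, if_true, apply_ite (star : ℂ → ℂ), star_one, star_zero, Finset.sum_mul,
      Finset.mul_sum]
    conv_lhs => enter [2, x]; rw [Finset.sum_comm]
    conv_lhs => enter [2, x, 2, x2]; rw [Finset.sum_comm]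
    conv_lhs => rw [Finset.sum_comm]
    conv_lhs => enter [2, x2]; rw [Finset.sum_comm]
    conv_rhs => enter [2, x, 2, y]; rw [Finset.sum_comm]
    refine Finset.sum_congr rfl fun r1 _ => Finset.sum_congr rfl fun r2 _ =>
      Finset.sum_congr rfl fun i _ => Finset.sum_congr rfl fun j _ => ?_
    ring
  rw [key]
  refine Finset.sum_induction _ _ (fun a b ha hb => ha.add hb) Matrix.PosSemidef.zero
    fun r _ => hX.mul_mul_conjTranspose_same _

lemma choi_psd {n m : ℕ} (Λ : Matrix (Fin n) (Fin n) ℂ →ₗ[ℂ] Matrix (Fin m) (Fin m) ℂ)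
    (hCP : IsCP Λ) : (choi Λ).PosSemidef := by
  set P : Matrix (Fin n × Fin n) (Fin n × Fin n) ℂ :=
    Matrix.of fun p q => if p.1 = p.2 ∧ q.1 = q.2 then 1 else 0 with hP
  have hPpsd : P.PosSemidef := by
    have : P = (Matrix.of fun (_ : Unit) (p : Fin n × Fin n) =>
        if p.1 = p.2 then (1 : ℂ) else 0)ᴴ *
        (Matrix.of fun (_ : Unit) (p : Fin n × Fin n) => if p.1 = p.2 then (1 : ℂ) else 0) := by
      ext p q
      simp only [hP, Matrix.mul_apply, conjTranspose_apply, of_apply,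
        apply_ite (star : ℂ → ℂ), star_one, star_zero, ite_and, ite_mul, mul_ite,
        one_mul, mul_one, zero_mul, mul_zero, Finset.univ_unique, Finset.sum_singleton]
      split_ifs <;> rfl
    rw [this]
    exact Matrix.posSemidef_conjTranspose_mul_self _
  have hchoi : choi Λ = matMap Λ P := by
    ext ⟨i, a⟩ ⟨j, b⟩
    rw [choi_apply]
    rfl
  rw [hchoi]
  exact hCP n P hPpsd

lemma trB_choi {n m : ℕ} (Λ : Matrix (Fin n) (Fin n) ℂ →ₗ[ℂ] Matrix (Fin m) (Fin m) ℂ)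
    (hTP : IsTP Λ) : trB (choi Λ) = 1 := by
  ext i j
  show (∑ a : Fin m, choi Λ (i, a) (j, a)) = _
  simp only [choi_apply]
  have : (∑ a : Fin m, Λ (single i j 1) a a) = (Λ (single i j 1)).trace := rfl
  rw [this, hTP]
  simp [Matrix.trace, Matrix.diag, single, ite_and, Finset.sum_ite_eq,
    Matrix.one_apply, eq_comm]

/-- the Choi map is a bijection between CPTP maps and quantum
conditional probability operators, with inverse `π ↦ (ρ ↦ Tr_A[π (ρᵀ ⊗ I)])`. -/
theorem choi_bijection {n m : ℕ} :
    (∀ Λ : Matrix (Fin n) (Fin n) ℂ →ₗ[ℂ] Matrix (Fin m) (Fin m) ℂ,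
        IsCP Λ → IsTP Λ → (choi Λ).PosSemidef ∧ trB (choi Λ) = 1) ∧
    (∀ π : Matrix (Fin n × Fin m) (Fin n × Fin m) ℂ, π.PosSemidef → trB π = 1 →
        ∃! Λ : Matrix (Fin n) (Fin n) ℂ →ₗ[ℂ] Matrix (Fin m) (Fin m) ℂ,
          (IsCP Λ ∧ IsTP Λ) ∧ choi Λ = π) ∧
    (∀ Λ : Matrix (Fin n) (Fin n) ℂ →ₗ[ℂ] Matrix (Fin m) (Fin m) ℂ, IsCP Λ → IsTP Λ →
        ∀ ρ, Λ ρ = trA (choi Λ * (ρᵀ ⊗ₖ (1 : Matrix (Fin m) (Fin m) ℂ)))) := by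

  refine ⟨fun Λ hCP hTP => ⟨choi_psd Λ hCP, trB_choi Λ hTP⟩, fun π hpsd htr => ?_,
    fun Λ hCP hTP ρ => ?_⟩
  · refine ⟨Lmap π, ⟨⟨isCP_Lmap π hpsd, isTP_Lmap π htr⟩, choi_Lmap π⟩, ?_⟩
    rintro Λ ⟨-, hchoi⟩
    rw [← Lmap_choi Λ, hchoi]
  · rw [trA_mul_kron, Lmap_choi]
end
end

section
/- Let Φ : M_n(ℂ) → M_n(ℂ) be a positive trace-preserving linear map. Then Φ has a fixed point ρ_* which is a density matrix: there exists ρ_* ≥ 0 with Tr(ρ_*) = 1 and Φ(ρ_*) = ρ_*. -/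
open Matrix
open scoped Kronecker ComplexOrder

noncomputable section

open Filter Topology

attribute [local instance] Matrix.normedAddCommGroup Matrix.normedSpace

noncomputable section
namespace QPF

variable {n : ℕ}

lemma diag_nonneg {ρ : Matrix (Fin n) (Fin n) ℂ} (h : ρ.PosSemidef) (i : Fin n) :
    0 ≤ ρ i i := by
  simpa [dotProduct, mulVec, Pi.single_apply] using h.dotProduct_mulVec_nonneg (Pi.single i 1)

lemma entry_quad {ρ : Matrix (Fin n) (Fin n) ℂ} (h : ρ.PosSemidef) (i j : Fin n) (a b : ℂ) :
    0 ≤ (starRingEnd ℂ a) * a * ρ i i + (starRingEnd ℂ a) * b * ρ i j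
        + (starRingEnd ℂ b) * a * ρ j i + (starRingEnd ℂ b) * b * ρ j j := by
  have := h.dotProduct_mulVec_nonneg (Pi.single i a + Pi.single j b)
  simp only [dotProduct, mulVec, Pi.add_apply, Pi.single_apply, star_add, Pi.star_apply,
    apply_ite (star : ℂ → ℂ), star_zero, mul_add, add_mul, Finset.sum_add_distrib,
    Finset.mul_sum, ite_mul, zero_mul, mul_ite, mul_zero, Finset.sum_ite_eq',
    Finset.mem_univ, if_true] at this
  convert this using 1
  simp [RCLike.star_def]
  ring

lemma diag_re_le_one {ρ : Matrix (Fin n) (Fin n) ℂ} (h : ρ.PosSemidef) (ht : ρ.trace = 1)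
    (i : Fin n) : (ρ i i).re ≤ 1 := by
  have hre : ∑ k, (ρ k k).re = 1 := by
    have : (ρ.trace).re = 1 := by rw [ht]; simp
    simpa [Matrix.trace, Matrix.diag, Complex.re_sum] using this
  calc (ρ i i).re ≤ ∑ k, (ρ k k).re := by
        refine Finset.single_le_sum (f := fun k => (ρ k k).re) (fun k _ => ?_) (Finset.mem_univ i)
        exact (Complex.le_def.mp (diag_nonneg h k)).1
    _ = 1 := hre

lemma norm_le_one {ρ : Matrix (Fin n) (Fin n) ℂ} (h : ρ.PosSemidef) (ht : ρ.trace = 1) :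
    ‖ρ‖ ≤ 1 := by
  rw [Matrix.norm_le_iff zero_le_one]
  intro i j
  have hq := entry_quad h i j 1 (-(starRingEnd ℂ (ρ i j)))
  have hji : ρ j i = starRingEnd ℂ (ρ i j) := by
    have := h.1.apply j i
    simpa using this.symm
  set z := ρ i j with hz
  have hs : (0:ℝ) ≤ Complex.normSq z := Complex.normSq_nonneg z
  have hq' : 0 ≤ ρ i i - (Complex.normSq z : ℂ) - (Complex.normSq z : ℂ)
      + (Complex.normSq z : ℂ) * ρ j j := by
    convert hq using 1
    simp [hji, Complex.normSq_eq_conj_mul_self]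
    ring
  have hre : (0:ℝ) ≤ (ρ i i).re - Complex.normSq z - Complex.normSq z
      + Complex.normSq z * (ρ j j).re := by
    have := (Complex.le_def.mp hq').1
    simpa [Complex.add_re, Complex.sub_re, Complex.mul_re, Complex.ofReal_re, Complex.ofReal_im] using this
  have h1 : (ρ i i).re ≤ 1 := diag_re_le_one h ht i
  have h2 : (ρ j j).re ≤ 1 := diag_re_le_one h ht j
  have hsq : Complex.normSq z ≤ 1 := by nlinarith
  have : ‖z‖ ^ 2 ≤ 1 := by
    rw [← Complex.sq_norm] at hsq
    simpa using hsq
  nlinarith [norm_nonneg z]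

lemma isCompact_D :
    IsCompact {ρ : Matrix (Fin n) (Fin n) ℂ | ρ.PosSemidef ∧ ρ.trace = 1} := by
  apply Metric.isCompact_of_isClosed_isBounded
  · have h1 : IsClosed {ρ : Matrix (Fin n) (Fin n) ℂ | ρ.IsHermitian} := by
      have : {ρ : Matrix (Fin n) (Fin n) ℂ | ρ.IsHermitian}
          = {ρ | ρᴴ = ρ} := rfl
      rw [this]
      exact isClosed_eq (continuous_id.matrix_conjTranspose) continuous_id
    have h2 : IsClosed {ρ : Matrix (Fin n) (Fin n) ℂ |
        ∀ x : Fin n → ℂ, 0 ≤ dotProduct (star x) (ρ *ᵥ x)} := by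
      rw [Set.setOf_forall]
      refine isClosed_iInter fun x => ?_
      have hc : Continuous fun ρ : Matrix (Fin n) (Fin n) ℂ =>
          dotProduct (star x) (ρ *ᵥ x) :=
        (continuous_const.dotProduct (continuous_id.matrix_mulVec continuous_const))
      have hcl : IsClosed {z : ℂ | 0 ≤ z} := by
        have : {z : ℂ | 0 ≤ z} = {z : ℂ | 0 ≤ z.re} ∩ {z : ℂ | z.im = 0} := by
          ext z; simp [Complex.le_def, eq_comm]
        rw [this]
        exact (isClosed_le continuous_const Complex.continuous_re).inter
          (isClosed_eq Complex.continuous_im continuous_const)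
      exact hcl.preimage hc
    have h3 : IsClosed {ρ : Matrix (Fin n) (Fin n) ℂ | ρ.trace = 1} :=
      isClosed_eq (continuous_id.matrix_trace) continuous_const
    have : {ρ : Matrix (Fin n) (Fin n) ℂ | ρ.PosSemidef ∧ ρ.trace = 1}
        = ({ρ | ρ.IsHermitian} ∩ {ρ | ∀ x : Fin n → ℂ, 0 ≤ dotProduct (star x) (ρ *ᵥ x)})
          ∩ {ρ | ρ.trace = 1} := by
      ext ρ; exact ⟨fun ⟨h, c⟩ => ⟨⟨h.1, h.dotProduct_mulVec_nonneg⟩, c⟩, fun ⟨⟨a, b⟩, c⟩ => ⟨.of_dotProduct_mulVec_nonneg a b, c⟩⟩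
    rw [this]
    exact ((h1.inter h2).inter h3)
  · refine (Metric.isBounded_closedBall (x := (0 : Matrix (Fin n) (Fin n) ℂ)) (r := 1)).subset
      fun ρ hρ => ?_
    rw [Metric.mem_closedBall, dist_zero_right]
    exact norm_le_one hρ.1 hρ.2

lemma smul_posSemidef {ρ : Matrix (Fin n) (Fin n) ℂ} (h : ρ.PosSemidef) {r : ℝ} (hr : 0 ≤ r) :
    ((r : ℂ) • ρ).PosSemidef := by
  refine .of_dotProduct_mulVec_nonneg ?_ fun x => ?_
  · unfold Matrix.IsHermitian
    rw [conjTranspose_smul, h.1.eq]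
    simp
  · rw [smul_mulVec, dotProduct_smul, smul_eq_mul]
    exact mul_nonneg (by exact_mod_cast hr) (h.dotProduct_mulVec_nonneg x)

lemma sum_posSemidef {s : Finset ℕ} {f : ℕ → Matrix (Fin n) (Fin n) ℂ}
    (h : ∀ k ∈ s, (f k).PosSemidef) : (∑ k ∈ s, f k).PosSemidef := by
  classical
  induction s using Finset.induction with
  | empty => simpa using Matrix.PosSemidef.zero
  | insert _ _ hx ih =>
    rw [Finset.sum_insert hx]
    exact (h _ (Finset.mem_insert_self _ _)).add
      (ih fun k hk => h k (Finset.mem_insert_of_mem hk))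

end QPF

open QPF

/-- quantum Perron–Frobenius fixed point theorem: every positive
trace-preserving linear map has a density-matrix fixed point. -/
theorem quantum_perron_frobenius {n : ℕ} (hn : 0 < n)
    (Φ : Matrix (Fin n) (Fin n) ℂ →ₗ[ℂ] Matrix (Fin n) (Fin n) ℂ)
    (hpos : ∀ X : Matrix (Fin n) (Fin n) ℂ, X.PosSemidef → (Φ X).PosSemidef)
    (hTP : ∀ X, (Φ X).trace = X.trace) :
    ∃ ρ : Matrix (Fin n) (Fin n) ℂ, ρ.PosSemidef ∧ ρ.trace = 1 ∧ Φ ρ = ρ := by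
  classical
  set D := {ρ : Matrix (Fin n) (Fin n) ℂ | ρ.PosSemidef ∧ ρ.trace = 1} with hDdef
  have hnC : (n : ℂ) ≠ 0 := Nat.cast_ne_zero.mpr hn.ne'
  -- the maximally mixed state
  set ρ₀ : Matrix (Fin n) (Fin n) ℂ := ((n : ℂ))⁻¹ • 1 with hρ₀
  have hρ₀D : ρ₀ ∈ D := by
    constructor
    · have : (((n : ℝ)⁻¹ : ℝ) : ℂ) = ((n : ℂ))⁻¹ := by push_cast; ring
      rw [hρ₀, ← this]
      exact smul_posSemidef Matrix.PosSemidef.one (by positivity)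
    · simp [hρ₀, Matrix.trace_smul, Matrix.trace_one, inv_mul_cancel₀ hnC, smul_eq_mul]
  -- iterates stay in D
  have hiter : ∀ k : ℕ, (Φ ^ k) ρ₀ ∈ D := by
    intro k
    induction k with
    | zero => simpa using hρ₀D
    | succ k ih =>
      rw [pow_succ', Module.End.mul_apply]
      exact ⟨hpos _ ih.1, by rw [hTP]; exact ih.2⟩
  -- Cesàro averages
  set σ : ℕ → Matrix (Fin n) (Fin n) ℂ :=
    fun N => (((N + 1 : ℕ) : ℂ))⁻¹ • ∑ k ∈ Finset.range (N + 1), (Φ ^ k) ρ₀ with hσ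
  have hNc : ∀ N : ℕ, ((N + 1 : ℕ) : ℂ) ≠ 0 := fun N => Nat.cast_ne_zero.mpr (Nat.succ_ne_zero N)
  have hσD : ∀ N, σ N ∈ D := by
    intro N
    constructor
    · have hcast : ((((N + 1 : ℕ) : ℝ)⁻¹ : ℝ) : ℂ) = (((N + 1 : ℕ) : ℂ))⁻¹ := by
        push_cast; ring
      show (((((N + 1 : ℕ) : ℂ)))⁻¹ • ∑ k ∈ Finset.range (N + 1), (Φ ^ k) ρ₀).PosSemidef
      rw [← hcast]
      exact smul_posSemidef (sum_posSemidef fun k _ => (hiter k).1) (by positivity)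
    · show ((((N + 1 : ℕ) : ℂ))⁻¹ • ∑ k ∈ Finset.range (N + 1), (Φ ^ k) ρ₀).trace = 1
      simp only [Matrix.trace_smul, Matrix.trace_sum, smul_eq_mul]
      have : ∀ k ∈ Finset.range (N + 1), ((Φ ^ k) ρ₀).trace = 1 := fun k _ => (hiter k).2
      rw [Finset.sum_congr rfl this]
      simp only [Finset.sum_const, Finset.card_range, nsmul_eq_mul, mul_one]
      exact inv_mul_cancel₀ (hNc N)
  -- compactness: extract a convergent subsequence
  haveI : FirstCountableTopology (Matrix (Fin n) (Fin n) ℂ) :=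
    inferInstanceAs (FirstCountableTopology (Fin n → Fin n → ℂ))
  obtain ⟨ρ, hρD, φ, hφ, hlim⟩ := isCompact_D.tendsto_subseq hσD
  refine ⟨ρ, hρD.1, hρD.2, ?_⟩
  have hcont : Continuous Φ := Φ.continuous_of_finiteDimensional
  -- key telescoping identity
  have hkey : ∀ N, Φ (σ N) - σ N
      = (((N + 1 : ℕ) : ℂ))⁻¹ • ((Φ ^ (N + 1)) ρ₀ - ρ₀) := by
    intro N
    show Φ ((((N + 1 : ℕ) : ℂ))⁻¹ • ∑ k ∈ Finset.range (N + 1), (Φ ^ k) ρ₀)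
        - (((N + 1 : ℕ) : ℂ))⁻¹ • ∑ k ∈ Finset.range (N + 1), (Φ ^ k) ρ₀
        = (((N + 1 : ℕ) : ℂ))⁻¹ • ((Φ ^ (N + 1)) ρ₀ - ρ₀)
    rw [_root_.map_smul, map_sum, ← smul_sub]
    congr 1
    rw [← Finset.sum_sub_distrib]
    have : ∀ k ∈ Finset.range (N + 1), Φ ((Φ ^ k) ρ₀) - (Φ ^ k) ρ₀
        = (Φ ^ (k + 1)) ρ₀ - (Φ ^ k) ρ₀ := by
      intro k _
      rw [pow_succ', Module.End.mul_apply]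
    rw [Finset.sum_congr rfl this, Finset.sum_range_sub (fun k => (Φ ^ k) ρ₀)]
    simp
  -- the difference tends to zero
  have hzero : Tendsto (fun N => Φ (σ (φ N)) - σ (φ N)) atTop (𝓝 0) := by
    refine squeeze_zero_norm (f := fun N => Φ (σ (φ N)) - σ (φ N)) (a := fun N => 2 / ((N : ℝ) + 1)) ?_ ?_
    · intro N
      rw [hkey, norm_smul]
      have h1 : ‖(((φ N + 1 : ℕ) : ℂ))⁻¹‖ = ((φ N + 1 : ℕ) : ℝ)⁻¹ := by
        rw [norm_inv, Complex.norm_natCast]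
      have h2 : ‖(Φ ^ (φ N + 1)) ρ₀ - ρ₀‖ ≤ 2 := by
        refine (norm_sub_le _ _).trans ?_
        have := norm_le_one (hiter (φ N + 1)).1 (hiter (φ N + 1)).2
        have := norm_le_one hρ₀D.1 hρ₀D.2
        linarith
      rw [h1]
      have hφN : (N : ℝ) + 1 ≤ ((φ N + 1 : ℕ) : ℝ) := by
        push_cast
        have : (N : ℝ) ≤ (φ N : ℝ) := Nat.cast_le.mpr hφ.le_apply
        linarith
      calc ((φ N + 1 : ℕ) : ℝ)⁻¹ * ‖(Φ ^ (φ N + 1)) ρ₀ - ρ₀‖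
          ≤ ((φ N + 1 : ℕ) : ℝ)⁻¹ * 2 := by
            apply mul_le_mul_of_nonneg_left h2 (by positivity)
        _ ≤ 2 / ((N : ℝ) + 1) := by
            have hinv : ((φ N + 1 : ℕ) : ℝ)⁻¹ ≤ ((N : ℝ) + 1)⁻¹ :=
              inv_anti₀ (by positivity) hφN
            rw [div_eq_mul_inv]
            linarith
    · have h := tendsto_one_div_add_atTop_nhds_zero_nat.const_mul (2 : ℝ)
      simpa [div_eq_mul_inv, mul_comm, mul_assoc, mul_left_comm] using h
  have hlim2 : Tendsto (fun N => Φ (σ (φ N)) - σ (φ N)) atTop (𝓝 (Φ ρ - ρ)) :=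
    ((hcont.tendsto ρ).comp hlim).sub hlim
  have : Φ ρ - ρ = 0 := tendsto_nhds_unique hlim2 hzero
  exact sub_eq_zero.mp this
end
end
end

section
/- Let Λ : M_n(ℂ) → M_n(ℂ) be a quantum channel and T the transposition in the computational basis. Then there exists a density matrix ρ_* with Λ(ρ_*^T) = ρ_*, and the compound state ρ_{AB} = (ρ_*^{1/2} ⊗ I) π_{B|A} (ρ_*^{1/2} ⊗ I), where π_{B|A} is the Choi operator of Λ, is a broadcast of ρ_*: Tr_B(ρ_{AB}) = ρ_* and Tr_A(ρ_{AB}) = ρ_*. Hence every quantum channel broadcasts some state. -/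
open Matrix
open scoped Kronecker ComplexOrder

noncomputable section

/-- The square root of a positive semidefinite matrix, as defined in Mathlib (Dec 2024). -/
def Matrix.PosSemidef.sqrt {n𝕜 : Type*} {𝕜 : Type*} [Fintype n𝕜] [DecidableEq n𝕜] [RCLike 𝕜]
    {A : Matrix n𝕜 n𝕜 𝕜} (hA : A.PosSemidef) : Matrix n𝕜 n𝕜 𝕜 :=
  hA.1.eigenvectorUnitary.1 * diagonal ((↑) ∘ (√·) ∘ hA.1.eigenvalues) *
    (star hA.1.eigenvectorUnitary : Matrix n𝕜 n𝕜 𝕜)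

section Helpers

variable {n m : ℕ}

open scoped MatrixOrder in
lemma psd_eq_conjTranspose_mul_self {M : Matrix (Fin n) (Fin n) ℂ} (hM : M.PosSemidef) :
    ∃ B : Matrix (Fin n) (Fin n) ℂ, M = Bᴴ * B := by
  obtain ⟨B, hB⟩ := CStarAlgebra.nonneg_iff_eq_star_mul_self.mp hM.nonneg
  exact ⟨B, hB⟩

lemma psd_sqrt_mul_self {A : Matrix (Fin n) (Fin n) ℂ} (hA : A.PosSemidef) :
    hA.sqrt * hA.sqrt = A := by
  have hU1 : star (hA.1.eigenvectorUnitary : Matrix (Fin n) (Fin n) ℂ) *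
      (hA.1.eigenvectorUnitary : Matrix (Fin n) (Fin n) ℂ) = 1 :=
    (Unitary.mem_iff.mp hA.1.eigenvectorUnitary.2).1
  conv_rhs => rw [hA.1.spectral_theorem]
  unfold Matrix.PosSemidef.sqrt
  rw [Unitary.conjStarAlgAut_apply]
  set U : Matrix (Fin n) (Fin n) ℂ := (hA.1.eigenvectorUnitary : Matrix (Fin n) (Fin n) ℂ)
  set D : Matrix (Fin n) (Fin n) ℂ := diagonal (RCLike.ofReal ∘ (fun x => √x) ∘ hA.1.eigenvalues)
  rw [show U * D * star U * (U * D * star U) = U * (D * (star U * U) * D) * star U by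
    noncomm_ring, hU1, Matrix.mul_one, Matrix.diagonal_mul_diagonal]
  congr 2
  refine congrArg diagonal (funext fun i => ?_)
  simp only [Function.comp_apply]
  exact_mod_cast Real.mul_self_sqrt (hA.eigenvalues_nonneg i)

lemma pos_of_cp (Λ : Matrix (Fin n) (Fin n) ℂ →ₗ[ℂ] Matrix (Fin m) (Fin m) ℂ)
    (hCP : IsCP Λ) {ρ : Matrix (Fin n) (Fin n) ℂ} (h : ρ.PosSemidef) :
    (Λ ρ).PosSemidef := by
  let e : Fin 1 × Fin n ≃ Fin n :=
    ⟨fun p => p.2, fun i => (0, i), fun p => by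
      obtain ⟨a, i⟩ := p; simp [Subsingleton.elim (0 : Fin 1) a], fun i => rfl⟩
  let e' : Fin 1 × Fin m ≃ Fin m :=
    ⟨fun p => p.2, fun i => (0, i), fun p => by
      obtain ⟨a, i⟩ := p; simp [Subsingleton.elim (0 : Fin 1) a], fun i => rfl⟩
  have hX : (ρ.submatrix e e).PosSemidef := (Matrix.posSemidef_submatrix_equiv e).mpr h
  have key : matMap Λ (ρ.submatrix e e) = (Λ ρ).submatrix e' e' := by
    ext p q
    show Λ (Matrix.of fun i j => ρ.submatrix e e (p.1, i) (q.1, j)) p.2 q.2 = Λ ρ (e' p) (e' q)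
    have : (Matrix.of fun i j => ρ.submatrix e e (p.1, i) (q.1, j)) = ρ := by
      ext i j; rfl
    rw [this]
    rfl
  have := hCP 1 _ hX
  rw [key] at this
  exact (Matrix.posSemidef_submatrix_equiv e').mp this


lemma psd_trace_nonneg {M : Matrix (Fin n) (Fin n) ℂ} (hM : M.PosSemidef) : 0 ≤ M.trace := by
  obtain ⟨B, rfl⟩ := psd_eq_conjTranspose_mul_self hM
  rw [Matrix.trace]
  refine Finset.sum_nonneg fun j _ => ?_
  simpa [Matrix.mul_apply, Matrix.diag] using
    Finset.sum_nonneg fun i _ => star_mul_self_nonneg (B i j)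

lemma psd_trace_eq_zero {M : Matrix (Fin n) (Fin n) ℂ} (hM : M.PosSemidef)
    (h : M.trace = 0) : M = 0 := by
  obtain ⟨B, rfl⟩ := psd_eq_conjTranspose_mul_self hM
  suffices hB : B = 0 by simp [hB]
  have : ∑ j, ∑ i, star (B i j) * B i j = 0 := by
    simpa [Matrix.trace, Matrix.diag, Matrix.mul_apply, Matrix.conjTranspose_apply] using h
  have h2 := (Finset.sum_eq_zero_iff_of_nonneg (fun j _ =>
    Finset.sum_nonneg fun i _ => star_mul_self_nonneg (B i j))).mp this
  ext i j
  have h3 := (Finset.sum_eq_zero_iff_of_nonneg (fun i _ =>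
    star_mul_self_nonneg (B i j))).mp (h2 j (Finset.mem_univ j)) i (Finset.mem_univ i)
  have h4 : Complex.normSq (B i j) = 0 := by
    have := congrArg Complex.re h3
    simpa [Complex.mul_re, Complex.normSq] using this
  simpa using Complex.normSq_eq_zero.mp h4


lemma jordan {H : Matrix (Fin n) (Fin n) ℂ} (hH : H.IsHermitian) :
    ∃ Hp Hm P : Matrix (Fin n) (Fin n) ℂ,
      Hp.PosSemidef ∧ Hm.PosSemidef ∧ H = Hp - Hm ∧
      Pᴴ = P ∧ P * P = P ∧ P * H * P = Hp := by
  set U : Matrix (Fin n) (Fin n) ℂ := (hH.eigenvectorUnitary : Matrix (Fin n) (Fin n) ℂ) with hUdef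
  have hU1 : star U * U = 1 := (Unitary.mem_iff.mp hH.eigenvectorUnitary.2).1
  set lam := hH.eigenvalues with hlam
  set Dp : Matrix (Fin n) (Fin n) ℂ := diagonal (fun i => (max (lam i) 0 : ℝ)) with hDp
  set Dm : Matrix (Fin n) (Fin n) ℂ := diagonal (fun i => (max (-lam i) 0 : ℝ)) with hDm
  set Q : Matrix (Fin n) (Fin n) ℂ := diagonal (fun i => if 0 < lam i then (1:ℂ) else 0) with hQ
  refine ⟨U * Dp * star U, U * Dm * star U, U * Q * star U, ?_, ?_, ?_, ?_, ?_, ?_⟩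
  · exact (Matrix.posSemidef_diagonal_iff.mpr (fun i => by positivity)).mul_mul_conjTranspose_same U
  · exact (Matrix.posSemidef_diagonal_iff.mpr (fun i => by positivity)).mul_mul_conjTranspose_same U
  · have hDD : Dp - Dm = diagonal (RCLike.ofReal ∘ lam) := by
      rw [hDp, hDm, Matrix.diagonal_sub]
      refine congrArg diagonal (funext fun i => ?_)
      rw [Function.comp_apply, ← Complex.ofReal_sub]
      norm_cast
      rcases le_total (lam i) 0 with h | h
      · simp [max_eq_right h, max_eq_left (neg_nonneg.mpr h)]
      · simp [max_eq_left h, max_eq_right (neg_nonpos.mpr h)]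
    calc H = U * diagonal (RCLike.ofReal ∘ lam) * star U := hH.spectral_theorem
    _ = U * Dp * star U - U * Dm * star U := by rw [← hDD]; noncomm_ring
  · have hQH : Qᴴ = Q := by
      rw [hQ, Matrix.diagonal_conjTranspose]
      refine congrArg diagonal (funext fun i => ?_)
      simp only [Pi.star_apply]
      split <;> simp
    simp only [conjTranspose_mul, conjTranspose_conjTranspose, hQH]
    rw [Matrix.mul_assoc, Matrix.star_eq_conjTranspose, Matrix.conjTranspose_conjTranspose]
  · calc U * Q * star U * (U * Q * star U) = U * (Q * (star U * U) * Q) * star U := by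
          noncomm_ring
    _ = U * Q * star U := by
          rw [hU1, Matrix.mul_one, hQ, Matrix.diagonal_mul_diagonal]
          rw [show (diagonal fun i => (if 0 < lam i then (1:ℂ) else 0) * if 0 < lam i then 1 else 0)
              = diagonal fun i => if 0 < lam i then (1:ℂ) else 0 from
            congrArg diagonal (funext fun i => by split <;> simp)]
  · rw [hH.spectral_theorem]
    calc U * Q * star U * (U * diagonal (RCLike.ofReal ∘ lam) * star U) * (U * Q * star U)
        = U * ((Q * (star U * U)) * (diagonal (RCLike.ofReal ∘ lam) * ((star U * U) * Q))) * star U := by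
          noncomm_ring
    _ = U * (Q * diagonal (RCLike.ofReal ∘ lam) * Q) * star U := by
          rw [hU1]; noncomm_ring
    _ = U * Dp * star U := by
          congr 1; congr 1
          rw [hQ, Matrix.diagonal_mul_diagonal, Matrix.diagonal_mul_diagonal, hDp]
          refine congrArg diagonal (funext fun i => ?_)
          rcases lt_or_ge 0 (lam i) with h | h
          · simp [h, max_eq_left h.le]
          · simp [not_lt.mpr h, max_eq_right h]


lemma exists_fixed_ne_zero (hn : 0 < n)
    (Φ : Matrix (Fin n) (Fin n) ℂ →ₗ[ℂ] Matrix (Fin n) (Fin n) ℂ)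
    (hTP : ∀ X, (Φ X).trace = X.trace) : ∃ X, X ≠ 0 ∧ Φ X = X := by
  set L : Matrix (Fin n) (Fin n) ℂ →ₗ[ℂ] Matrix (Fin n) (Fin n) ℂ := Φ - LinearMap.id with hL
  have hns : ¬ Function.Surjective L := by
    intro hs
    obtain ⟨X, hX⟩ := hs 1
    have h0 : (L X).trace = 0 := by
      rw [hL, LinearMap.sub_apply, LinearMap.id_apply, Matrix.trace_sub, hTP, sub_self]
    rw [hX, Matrix.trace_one] at h0
    simp only [Fintype.card_fin] at h0
    exact_mod_cast absurd h0 (by exact_mod_cast hn.ne')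
  have hni : ¬ Function.Injective L := fun h => hns (LinearMap.injective_iff_surjective.mp h)
  rw [← LinearMap.ker_eq_bot] at hni
  obtain ⟨X, hXmem, hXne⟩ := Submodule.exists_mem_ne_zero_of_ne_bot hni
  refine ⟨X, hXne, ?_⟩
  have := LinearMap.mem_ker.mp hXmem
  rw [hL, LinearMap.sub_apply, LinearMap.id_apply, sub_eq_zero] at this
  exact this




lemma psd_smul {M : Matrix (Fin n) (Fin n) ℂ} (hM : M.PosSemidef) {c : ℂ} (hc : 0 ≤ c) :
    (c • M).PosSemidef := by
  refine Matrix.PosSemidef.of_dotProduct_mulVec_nonneg ?_ ?_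
  · have hcs : star c = c := by
      rw [Complex.star_def, Complex.conj_eq_iff_im]
      exact ((Complex.le_def.mp hc).2).symm
    rw [Matrix.IsHermitian, Matrix.conjTranspose_smul, hcs, hM.1.eq]
  · intro x
    rw [Matrix.smul_mulVec, dotProduct_smul, smul_eq_mul]
    exact mul_nonneg hc (hM.dotProduct_mulVec_nonneg x)

lemma map_conjTranspose (Φ : Matrix (Fin n) (Fin n) ℂ →ₗ[ℂ] Matrix (Fin n) (Fin n) ℂ)
    (hpos : ∀ ρ : Matrix (Fin n) (Fin n) ℂ, ρ.PosSemidef → (Φ ρ).PosSemidef)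
    (hjordan : ∀ H : Matrix (Fin n) (Fin n) ℂ, H.IsHermitian →
      ∃ Hp Hm : Matrix (Fin n) (Fin n) ℂ, Hp.PosSemidef ∧ Hm.PosSemidef ∧ H = Hp - Hm)
    (X : Matrix (Fin n) (Fin n) ℂ) : Φ Xᴴ = (Φ X)ᴴ := by
  have hherm : ∀ A : Matrix (Fin n) (Fin n) ℂ, A.IsHermitian → (Φ A).IsHermitian := by
    intro A hA
    obtain ⟨Hp, Hm, hp, hm, hd⟩ := hjordan A hA
    rw [hd, map_sub]
    exact (hpos _ hp).1.sub (hpos _ hm).1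
  set A := X + Xᴴ with hAdef
  set B := Complex.I • (X - Xᴴ) with hBdef
  have hA : A.IsHermitian := by
    rw [Matrix.IsHermitian, hAdef, Matrix.conjTranspose_add, Matrix.conjTranspose_conjTranspose,
      add_comm]
  have hB : B.IsHermitian := by
    rw [Matrix.IsHermitian, hBdef, Matrix.conjTranspose_smul, Matrix.conjTranspose_sub,
      Matrix.conjTranspose_conjTranspose, Complex.star_def, Complex.conj_I, neg_smul, smul_sub,
      smul_sub, neg_sub]
  have hX : X = (2⁻¹ : ℂ) • A - (2⁻¹ * Complex.I : ℂ) • B := by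
    rw [hAdef, hBdef, smul_smul]
    have : (2⁻¹ * Complex.I) * Complex.I = -2⁻¹ := by
      rw [mul_assoc, Complex.I_mul_I]; ring
    rw [this]
    module
  have hXH : Xᴴ = (2⁻¹ : ℂ) • A + (2⁻¹ * Complex.I : ℂ) • B := by
    rw [hAdef, hBdef, smul_smul]
    have : (2⁻¹ * Complex.I) * Complex.I = -2⁻¹ := by
      rw [mul_assoc, Complex.I_mul_I]; ring
    rw [this]
    module
  rw [hXH, hX, map_add, map_sub, _root_.map_smul Φ, _root_.map_smul Φ,
    Matrix.conjTranspose_sub, Matrix.conjTranspose_smul, Matrix.conjTranspose_smul,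
    (hherm A hA).eq, (hherm B hB).eq]
  have h1 : star (2⁻¹ : ℂ) = 2⁻¹ := by
    rw [Complex.star_def, ← Complex.ofReal_ofNat, ← Complex.ofReal_inv, Complex.conj_ofReal]
  have h2 : star (2⁻¹ * Complex.I : ℂ) = -(2⁻¹ * Complex.I) := by
    rw [Complex.star_def, _root_.map_mul, Complex.conj_I]
    rw [show ((starRingEnd ℂ) 2⁻¹) = (2⁻¹:ℂ) from h1]
    ring
  rw [h1, h2, neg_smul, sub_neg_eq_add]

lemma exists_density (hn : 0 < n)
    (Φ : Matrix (Fin n) (Fin n) ℂ →ₗ[ℂ] Matrix (Fin n) (Fin n) ℂ)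
    (hpos : ∀ ρ : Matrix (Fin n) (Fin n) ℂ, ρ.PosSemidef → (Φ ρ).PosSemidef)
    (hTP : ∀ X, (Φ X).trace = X.trace)
    (hadj : ∀ X, Φ Xᴴ = (Φ X)ᴴ) :
    ∃ ρ : Matrix (Fin n) (Fin n) ℂ, ρ.PosSemidef ∧ ρ.trace = 1 ∧ Φ ρ = ρ := by
  -- a nonzero fixed point
  obtain ⟨X, hXne, hXfix⟩ := exists_fixed_ne_zero hn Φ hTP
  -- a nonzero Hermitian fixed point
  obtain ⟨H, hHh, hHne, hHfix⟩ :
      ∃ H : Matrix (Fin n) (Fin n) ℂ, H.IsHermitian ∧ H ≠ 0 ∧ Φ H = H := by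
    set A := X + Xᴴ with hAdef
    set B := Complex.I • (X - Xᴴ) with hBdef
    have hA : A.IsHermitian := by
      rw [Matrix.IsHermitian, hAdef, Matrix.conjTranspose_add,
        Matrix.conjTranspose_conjTranspose, add_comm]
    have hB : B.IsHermitian := by
      rw [Matrix.IsHermitian, hBdef, Matrix.conjTranspose_smul, Matrix.conjTranspose_sub,
        Matrix.conjTranspose_conjTranspose, Complex.star_def, Complex.conj_I, neg_smul, smul_sub,
        smul_sub, neg_sub]
    have hAfix : Φ A = A := by rw [hAdef, map_add, hXfix, hadj, hXfix]
    have hBfix : Φ B = B := by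
      rw [hBdef, _root_.map_smul, map_sub, hXfix, hadj, hXfix]
    by_cases hA0 : A = 0
    · refine ⟨B, hB, ?_, hBfix⟩
      intro hB0
      apply hXne
      have h2X : (2 : ℂ) • X = A - Complex.I • B := by
        rw [hAdef, hBdef, smul_smul, Complex.I_mul_I, neg_smul, one_smul, sub_neg_eq_add]
        module
      rw [hA0, hB0, smul_zero, sub_zero] at h2X
      have := congrArg (fun M => (2⁻¹ : ℂ) • M) h2X
      simpa [smul_smul] using this
    · exact ⟨A, hA, hA0, hAfix⟩
  -- Jordan decomposition and fixedness of positive part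
  obtain ⟨Hp, Hm, P, hHp, hHm, hHsub, hPH, hPP, hPHP⟩ := jordan hHh
  set A := Φ Hp with hAd
  set B := Φ Hm with hBd
  have hApsd : A.PosSemidef := hpos _ hHp
  have hBpsd : B.PosSemidef := hpos _ hHm
  have hAB : A - B = H := by rw [hAd, hBd, ← map_sub, ← hHsub, hHfix]
  -- the trace identities
  set R : Matrix (Fin n) (Fin n) ℂ := 1 - P with hRd
  have hRH : Rᴴ = R := by rw [hRd, Matrix.conjTranspose_sub, Matrix.conjTranspose_one, hPH]
  have hRR : R * R = R := by
    rw [hRd]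
    simp only [Matrix.sub_mul, Matrix.mul_sub, Matrix.one_mul, Matrix.mul_one, hPP]
    abel
  have hX1 : (R * A * R).PosSemidef := by
    have := hApsd.mul_mul_conjTranspose_same R
    rwa [hRH] at this
  have hY1 : (P * B * P).PosSemidef := by
    have := hBpsd.mul_mul_conjTranspose_same P
    rwa [hPH] at this
  set x := (R * A * R).trace with hxd
  set y := (P * B * P).trace with hyd
  have hxy : x + y = 0 := by
    have e1 : (P * A * P).trace = A.trace - x := by
      rw [hxd]
      have : (R * A * R).trace = (A * R).trace := by
        rw [Matrix.trace_mul_cycle, hRR, Matrix.trace_mul_comm]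
      rw [this]
      have : (P * A * P).trace = (A * P).trace := by
        rw [Matrix.trace_mul_cycle, hPP, Matrix.trace_mul_comm]
      rw [this, hRd, Matrix.mul_sub, Matrix.mul_one, Matrix.trace_sub]
      ring
    have e2 : A.trace = Hp.trace := by rw [hAd, hTP]
    have e3 : Hp.trace = (P * A * P).trace - y := by
      rw [← hPHP, hyd, ← hAB]
      simp only [Matrix.mul_sub, Matrix.sub_mul, Matrix.trace_sub]
    linear_combination e1 + e2 + e3
  have hxn : 0 ≤ x := psd_trace_nonneg hX1
  have hyn : 0 ≤ y := psd_trace_nonneg hY1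
  have hx0 : x = 0 := le_antisymm
    ((eq_neg_of_add_eq_zero_left hxy) ▸ neg_nonpos_of_nonneg hyn) hxn
  have hy0 : y = 0 := by
    have := hxy; rw [hx0, zero_add] at this; exact this
  have hRAR : R * A * R = 0 := psd_trace_eq_zero hX1 hx0
  have hPBP : P * B * P = 0 := psd_trace_eq_zero hY1 hy0
  -- A = P * A * P
  obtain ⟨C, hC⟩ := psd_eq_conjTranspose_mul_self hApsd
  have hCR : C * R = 0 := by
    have h1 : (C * R)ᴴ * (C * R) = R * A * R := by
      rw [Matrix.conjTranspose_mul, hRH, hC]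
      rw [Matrix.mul_assoc, Matrix.mul_assoc, Matrix.mul_assoc]
    rw [hRAR] at h1
    exact Matrix.conjTranspose_mul_self_eq_zero.mp h1
  have hCP : C * P = C := by
    have := hCR
    rw [hRd, Matrix.mul_sub, Matrix.mul_one, sub_eq_zero] at this
    exact this.symm
  have hAP : A * P = A := by
    rw [hC, Matrix.mul_assoc, hCP]
  have hPA : P * A = A := by
    have h1 : (A * P)ᴴ = P * A := by rw [Matrix.conjTranspose_mul, hPH, hApsd.1.eq]
    rw [hAP, hApsd.1.eq] at h1
    exact h1.symm
  have hFixp : Φ Hp = Hp := by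
    have hABeq : A = H + B := by rw [← hAB]; abel
    have hPAP : P * A * P = Hp := by
      rw [hABeq, Matrix.mul_add, Matrix.add_mul, hPHP, hPBP, add_zero]
    calc Φ Hp = A := rfl
    _ = P * A * P := by rw [hPA, hAP]
    _ = Hp := hPAP
  have hFixm : Φ Hm = Hm := by
    have hmd : Hm = Hp - H := by rw [hHsub]; abel
    rw [hmd, map_sub, hFixp, hHfix]
  -- choose the nonzero fixed positive matrix
  obtain ⟨σ, hσpsd, hσne, hσfix⟩ :
      ∃ σ : Matrix (Fin n) (Fin n) ℂ, σ.PosSemidef ∧ σ ≠ 0 ∧ Φ σ = σ := by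
    by_cases hp0 : Hp = 0
    · refine ⟨Hm, hHm, ?_, hFixm⟩
      intro hm0
      exact hHne (by rw [hHsub, hp0, hm0, sub_zero])
    · exact ⟨Hp, hHp, hp0, hFixp⟩
  set t := σ.trace with htd
  have htnn : 0 ≤ t := psd_trace_nonneg hσpsd
  have htne : t ≠ 0 := fun h0 => hσne (psd_trace_eq_zero hσpsd h0)
  have htinv : 0 ≤ t⁻¹ := by
    have h1 : t = ((t.re : ℝ) : ℂ) := by
      apply Complex.ext
      · rfl
      · simp [(Complex.le_def.mp htnn).2.symm]
    rw [h1, ← Complex.ofReal_inv]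
    rw [Complex.le_def]
    constructor
    · simp only [Complex.zero_re, Complex.ofReal_re]
      have := (Complex.le_def.mp htnn).1
      simp only [Complex.zero_re] at this
      exact inv_nonneg.mpr this
    · simp
  refine ⟨t⁻¹ • σ, psd_smul hσpsd htinv, ?_, ?_⟩
  · rw [Matrix.trace_smul, smul_eq_mul, inv_mul_cancel₀ htne]
  · rw [_root_.map_smul, hσfix]


lemma trB_sum {ι : Type*} (s : Finset ι) (f : ι → Matrix (Fin n × Fin m) (Fin n × Fin m) ℂ) :
    trB (∑ i ∈ s, f i) = ∑ i ∈ s, trB (f i) := by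
  ext a b
  simp only [trB, Matrix.of_apply, Matrix.sum_apply]
  exact Finset.sum_comm

lemma trA_sum {ι : Type*} (s : Finset ι) (f : ι → Matrix (Fin n × Fin m) (Fin n × Fin m) ℂ) :
    trA (∑ i ∈ s, f i) = ∑ i ∈ s, trA (f i) := by
  ext a b
  simp only [trA, Matrix.of_apply, Matrix.sum_apply]
  exact Finset.sum_comm

lemma trB_kron (A : Matrix (Fin n) (Fin n) ℂ) (B : Matrix (Fin m) (Fin m) ℂ) :
    trB (A ⊗ₖ B) = B.trace • A := by
  ext i j
  simp only [trB, Matrix.of_apply, Matrix.kroneckerMap_apply, Matrix.smul_apply,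
    Matrix.trace, Matrix.diag, smul_eq_mul, Finset.sum_mul]
  exact Finset.sum_congr rfl fun a _ => mul_comm _ _

lemma trA_kron (A : Matrix (Fin n) (Fin n) ℂ) (B : Matrix (Fin m) (Fin m) ℂ) :
    trA (A ⊗ₖ B) = A.trace • B := by
  ext a b
  simp only [trA, Matrix.of_apply, Matrix.kroneckerMap_apply, Matrix.smul_apply,
    Matrix.trace, Matrix.diag, smul_eq_mul, Finset.sum_mul]

lemma sum_std_diag : ∑ i : Fin n, Matrix.single i i (1 : ℂ) = 1 := by
  ext a b
  simp only [Matrix.sum_apply, Matrix.single, Matrix.of_apply, Matrix.one_apply]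
  rcases eq_or_ne a b with rfl | h
  · simp
  · simp [h, fun i => show ¬(i = a ∧ i = b) from fun ⟨h1, h2⟩ => h (h1 ▸ h2 ▸ rfl)]

lemma trace_mul_std (ρ : Matrix (Fin n) (Fin n) ℂ) (i j : Fin n) :
    (ρ * Matrix.single i j (1 : ℂ)).trace = ρ j i := by
  simp only [Matrix.trace, Matrix.diag, Matrix.mul_apply, Matrix.single,
    Matrix.of_apply, mul_ite, mul_one, mul_zero, ite_and]
  rw [Finset.sum_comm]
  simp [Finset.sum_ite_eq]


end Helpers

/-- every quantum channel broadcasts some state: there is a density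
matrix `ρ_*` with `Λ(ρ_*ᵀ) = ρ_*`, and the compound state built from the Choi
operator is a broadcast of `ρ_*`. -/
theorem every_channel_broadcasts {n : ℕ} (hn : 0 < n)
    (Λ : Matrix (Fin n) (Fin n) ℂ →ₗ[ℂ] Matrix (Fin n) (Fin n) ℂ)
    (hCP : IsCP Λ) (hTP : IsTP Λ) :
    ∃ ρ : Matrix (Fin n) (Fin n) ℂ, ∃ hρ : ρ.PosSemidef, ρ.trace = 1 ∧ Λ ρᵀ = ρ ∧
      trB ((hρ.sqrt ⊗ₖ (1 : Matrix (Fin n) (Fin n) ℂ)) * choi Λ *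
        (hρ.sqrt ⊗ₖ (1 : Matrix (Fin n) (Fin n) ℂ))) = ρ ∧
      trA ((hρ.sqrt ⊗ₖ (1 : Matrix (Fin n) (Fin n) ℂ)) * choi Λ *
        (hρ.sqrt ⊗ₖ (1 : Matrix (Fin n) (Fin n) ℂ))) = ρ := by
  have hpos : ∀ ρ : Matrix (Fin n) (Fin n) ℂ, ρ.PosSemidef → (Λ ρ).PosSemidef :=
    fun ρ h => pos_of_cp Λ hCP h
  have hjordan : ∀ H : Matrix (Fin n) (Fin n) ℂ, H.IsHermitian →
      ∃ Hp Hm : Matrix (Fin n) (Fin n) ℂ, Hp.PosSemidef ∧ Hm.PosSemidef ∧ H = Hp - Hm := by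
    intro H hH
    obtain ⟨Hp, Hm, P, h1, h2, h3, _, _, _⟩ := jordan hH
    exact ⟨Hp, Hm, h1, h2, h3⟩
  have hadj : ∀ X, Λ Xᴴ = (Λ X)ᴴ := map_conjTranspose Λ hpos hjordan
  set Φ : Matrix (Fin n) (Fin n) ℂ →ₗ[ℂ] Matrix (Fin n) (Fin n) ℂ :=
    { toFun := fun X => Λ Xᵀ
      map_add' := fun X Y => by
        show Λ (X + Y)ᵀ = Λ Xᵀ + Λ Yᵀ
        rw [Matrix.transpose_add, map_add]
      map_smul' := fun c X => by
        show Λ (c • X)ᵀ = c • Λ Xᵀ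
        rw [Matrix.transpose_smul, _root_.map_smul] } with hΦd
  have hΦpos : ∀ ρ : Matrix (Fin n) (Fin n) ℂ, ρ.PosSemidef → (Φ ρ).PosSemidef :=
    fun ρ h => hpos _ h.transpose
  have hΦTP : ∀ X, (Φ X).trace = X.trace := by
    intro X
    show (Λ Xᵀ).trace = X.trace
    rw [hTP, Matrix.trace_transpose]
  have hΦadj : ∀ X, Φ Xᴴ = (Φ X)ᴴ := by
    intro X
    show Λ (Xᴴ)ᵀ = (Λ Xᵀ)ᴴ
    have : (Xᴴ)ᵀ = (Xᵀ)ᴴ := by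
      ext i j; simp [Matrix.conjTranspose_apply, Matrix.transpose_apply]
    rw [this, hadj]
  obtain ⟨ρ, hρpsd, hρtr, hρfix⟩ := exists_density hn Φ hΦpos hΦTP hΦadj
  have hρfix' : Λ ρᵀ = ρ := hρfix
  set s : Matrix (Fin n) (Fin n) ℂ := hρpsd.sqrt with hsd
  have hTP' : ∀ X : Matrix (Fin n) (Fin n) ℂ, (Λ X).trace = X.trace := hTP
  have key : (s ⊗ₖ (1 : Matrix (Fin n) (Fin n) ℂ)) * choi Λ *
      (s ⊗ₖ (1 : Matrix (Fin n) (Fin n) ℂ)) =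
      ∑ i : Fin n, ∑ j : Fin n,
        (s * Matrix.single i j 1 * s) ⊗ₖ Λ (Matrix.single i j 1) := by
    rw [choi]
    simp only [Finset.mul_sum, Finset.sum_mul, ← Matrix.mul_kronecker_mul, Matrix.mul_one,
      Matrix.one_mul]
  refine ⟨ρ, hρpsd, hρtr, hρfix', ?_, ?_⟩
  · -- trB goal
    rw [key, trB_sum]
    simp only [trB_sum, trB_kron, hTP']
    have h1 : ∀ i : Fin n, ∑ j : Fin n,
        (Matrix.single i j (1:ℂ)).trace • (s * Matrix.single i j 1 * s)
        = s * Matrix.single i i 1 * s := by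
      intro i
      rw [Finset.sum_eq_single i]
      · rw [Matrix.trace_single_eq_same, one_smul]
      · intro j _ hji
        rw [Matrix.trace_single_eq_of_ne _ _ _ hji.symm, zero_smul]
      · intro h; exact absurd (Finset.mem_univ i) h
    simp only [h1]
    rw [← Finset.sum_mul, ← Finset.mul_sum, sum_std_diag, Matrix.mul_one,
      psd_sqrt_mul_self hρpsd]
  · -- trA goal
    rw [key, trA_sum]
    simp only [trA_sum, trA_kron]
    have h2 : ∀ i j : Fin n, (s * Matrix.single i j (1:ℂ) * s).trace = ρ j i := by
      intro i j
      rw [Matrix.trace_mul_cycle, psd_sqrt_mul_self hρpsd, trace_mul_std]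
    simp only [h2]
    have h3 : ∑ i : Fin n, ∑ j : Fin n, ρ j i • Λ (Matrix.single i j 1) = Λ ρᵀ := by
      rw [show (∑ i : Fin n, ∑ j : Fin n, ρ j i • Λ (Matrix.single i j 1))
          = Λ (∑ i : Fin n, ∑ j : Fin n, ρ j i • Matrix.single i j 1) by
        rw [map_sum]
        exact Finset.sum_congr rfl fun i _ => by
          rw [map_sum]
          exact Finset.sum_congr rfl fun j _ => (_root_.map_smul Λ _ _).symm]
      congr 1
      conv_rhs => rw [matrix_eq_sum_single ρᵀ]
      refine Finset.sum_congr rfl fun i _ => Finset.sum_congr rfl fun j _ => ?_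
      rw [Matrix.smul_single, smul_eq_mul, mul_one, Matrix.transpose_apply]
    rw [h3, hρfix']
end
end
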